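/- arXiv:2103.05539 — 3 statements merged into one kernel-verified Lean document; each statement's English description precedes it below -/
import Mathlib

section
/- Let H be a complex Hilbert space and b : H × H → ℂ a bounded sesquilinear form satisfying the inf-sup condition with constant C > 0 and, symmetrically, sup_{u≠0} Re b(u,v)/(‖u‖‖v‖) > 0 for every v ≠ 0. Then for every bounded conjugate-linear functional ℓ there exists a unique u ∈ H with b(u,v) = ℓ(v) for all v ∈ H, and ‖u‖ ≤ C⁻¹‖ℓ‖. -/
open InnerProductSpace ComplexConjugate
noncomputable section

/-- Banach–Nečas–Babuška theorem in Hilbert spaces.  If the bounded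
sesquilinear form `b` satisfies the inf-sup condition with constant `C > 0` and the
transposed nondegeneracy condition, then for every bounded conjugate-linear functional
`ℓ` there is a unique `u` with `b(u,v) = ℓ(v)` for all `v`, and `‖u‖ ≤ C⁻¹‖ℓ‖`. -/
theorem banach_necas_babuska
    {V : Type*} [NormedAddCommGroup V] [InnerProductSpace ℂ V] [CompleteSpace V]
    (b : V →ₗ[ℂ] V →ₛₗ[starRingEnd ℂ] ℂ)
    (M : ℝ) (hbdd : ∀ u v : V, ‖b u v‖ ≤ M * ‖u‖ * ‖v‖)
    (C : ℝ) (hC : 0 < C)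
    (hinfsup : ∀ u : V, u ≠ 0 →
      C ≤ ⨆ v : {v : V // v ≠ 0}, (b u v.1).re / (‖u‖ * ‖v.1‖))
    (htrans : ∀ v : V, v ≠ 0 →
      0 < ⨆ u : {u : V // u ≠ 0}, (b u.1 v).re / (‖u.1‖ * ‖v‖))
    (ℓ : V →SL[starRingEnd ℂ] ℂ) :
    ∃ u : V, (∀ v : V, b u v = ℓ v) ∧ ‖u‖ ≤ C⁻¹ * ‖ℓ‖ ∧
      ∀ u' : V, (∀ v : V, b u' v = ℓ v) → u' = u := by
  classical
  have hbdd' : ∀ u v : V, ‖b u v‖ ≤ |M| * ‖u‖ * ‖v‖ := fun u v =>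
    (hbdd u v).trans (by gcongr ?_ * _ * _; exact le_abs_self M)
  -- the continuous linear functional v ↦ conj (b u v)
  set L : V → (V →L[ℂ] ℂ) := fun u =>
    LinearMap.mkContinuous
      { toFun := fun v => conj (b u v)
        map_add' := fun v w => by simp
        map_smul' := fun c v => by
          simp [map_smulₛₗ, mul_comm] }
      (|M| * ‖u‖)
      (fun v => by
        simpa [mul_assoc] using hbdd' u v) with hL
  have hLapp : ∀ u v : V, L u v = conj (b u v) := fun u v => rfl
  -- the operator A with ⟪A u, v⟫ = conj (b u v), i.e. b u v = ⟪v, A u⟫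
  set A : V →ₗ[ℂ] V :=
    { toFun := fun u => (InnerProductSpace.toDual ℂ V).symm (L u)
      map_add' := fun u u' => by
        apply ext_inner_right ℂ
        intro v
        simp only [InnerProductSpace.toDual_symm_apply, inner_add_left]
        simp [hLapp, map_add]
      map_smul' := fun c u => by
        apply ext_inner_right ℂ
        intro v
        simp only [RingHom.id_apply, InnerProductSpace.toDual_symm_apply, inner_smul_left]
        simp only [hLapp, map_smul, LinearMap.smul_apply, smul_eq_mul, map_mul] } with hA
  have hAinner : ∀ u v : V, ⟪A u, v⟫_ℂ = conj (b u v) := fun u v => by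
    simp [hA, InnerProductSpace.toDual_symm_apply, hLapp]
  have hAnorm : ∀ u : V, ‖A u‖ ≤ |M| * ‖u‖ := fun u => by
    have : ‖A u‖ = ‖L u‖ := by
      simp [hA, LinearIsometryEquiv.norm_map]
    rw [this]
    exact LinearMap.mkContinuous_norm_le _ (by positivity) _
  set Ac : V →L[ℂ] V := LinearMap.mkContinuous A |M| hAnorm with hAc
  have hAcA : ∀ u, Ac u = A u := fun u => rfl
  -- antilipschitz bound
  have hanti : ∀ u : V, C * ‖u‖ ≤ ‖A u‖ := by
    intro u
    rcases eq_or_ne u 0 with rfl | hu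
    · simp
    · have hu0 : (0:ℝ) < ‖u‖ := norm_pos_iff.mpr hu
      have : Nonempty {v : V // v ≠ 0} := ⟨⟨u, hu⟩⟩
      have hsup : (⨆ v : {v : V // v ≠ 0}, (b u v.1).re / (‖u‖ * ‖v.1‖)) ≤ ‖A u‖ / ‖u‖ := by
        apply ciSup_le
        rintro ⟨v, hv⟩
        have hv0 : (0:ℝ) < ‖v‖ := norm_pos_iff.mpr hv
        have h1 : (b u v).re ≤ ‖A u‖ * ‖v‖ := by
          have : (b u v).re ≤ ‖b u v‖ := Complex.re_le_norm _
          refine this.trans ?_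
          have : b u v = ⟪v, A u⟫_ℂ := by
            rw [← inner_conj_symm, hAinner]; simp
          rw [this]
          exact (norm_inner_le_norm _ _).trans_eq (by ring)
        rw [div_le_div_iff₀ (by positivity) hu0]
        calc (b u v).re * ‖u‖ ≤ ‖A u‖ * ‖v‖ * ‖u‖ := by
              apply mul_le_mul_of_nonneg_right h1 hu0.le
          _ = ‖A u‖ * (‖u‖ * ‖v‖) := by ring
      have := (hinfsup u hu).trans hsup
      rw [le_div_iff₀ hu0] at this
      linarith
  -- range of Ac is closed
  have hcont : UniformContinuous Ac := Ac.uniformContinuous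
  have hanti' : AntilipschitzWith (⟨C⁻¹, by positivity⟩ : NNReal) Ac := by
    apply Ac.antilipschitz_of_bound
    intro u
    rw [hAcA]
    push_cast
    show ‖u‖ ≤ C⁻¹ * ‖A u‖
    rw [inv_mul_eq_div, le_div_iff₀ hC, mul_comm]
    exact hanti u
  have hclosed : IsClosed (Set.range Ac) := hanti'.isClosed_range hcont
  set R : Submodule ℂ V := LinearMap.range (Ac : V →ₗ[ℂ] V) with hR
  have hRclosed : IsClosed (R : Set V) := by
    have : (R : Set V) = Set.range Ac := by
      ext x; simp [hR, LinearMap.mem_range]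
    rw [this]; exact hclosed
  haveI : CompleteSpace R := hRclosed.completeSpace_coe
  -- R is dense (orthogonal complement trivial), hence R = ⊤
  have hRtop : R = ⊤ := by
    rw [← Submodule.orthogonal_eq_bot_iff]
    rw [Submodule.eq_bot_iff]
    intro v hv
    by_contra hv0
    have hb0 : ∀ u : V, b u v = 0 := by
      intro u
      have : ⟪A u, v⟫_ℂ = 0 := by
        apply (Submodule.mem_orthogonal R v).mp hv
        exact ⟨u, rfl⟩
      have h2 := hAinner u v
      rw [this] at h2
      have := congrArg conj h2
      simpa using this.symm
    have hpos := htrans v hv0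
    have hvn : Nonempty {u : V // u ≠ 0} := ⟨⟨v, hv0⟩⟩
    have hzero : (⨆ u : {u : V // u ≠ 0}, (b u.1 v).re / (‖u.1‖ * ‖v‖)) = 0 := by
      have : ∀ u : {u : V // u ≠ 0}, (b u.1 v).re / (‖u.1‖ * ‖v‖) = 0 := by
        intro u; rw [hb0]; simp
      rw [show (fun u : {u : V // u ≠ 0} => (b u.1 v).re / (‖u.1‖ * ‖v‖)) = fun _ => (0:ℝ)
        from funext this]
      exact ciSup_const
    rw [hzero] at hpos
    exact lt_irrefl (0:ℝ) hpos
  -- representative of ℓ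
  set ℓ' : V →L[ℂ] ℂ :=
    LinearMap.mkContinuous
      { toFun := fun v => conj (ℓ v)
        map_add' := fun v w => by simp
        map_smul' := fun c v => by simp [mul_comm] }
      ‖ℓ‖
      (fun v => by simpa using ℓ.le_opNorm v) with hℓ'
  have hℓ'app : ∀ v, ℓ' v = conj (ℓ v) := fun v => rfl
  set f : V := (InnerProductSpace.toDual ℂ V).symm ℓ' with hf
  have hfinner : ∀ v : V, ⟪f, v⟫_ℂ = conj (ℓ v) := fun v => by
    simp [hf, InnerProductSpace.toDual_symm_apply, hℓ'app]
  have hfnorm : ‖f‖ ≤ ‖ℓ‖ := by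
    have : ‖f‖ = ‖ℓ'‖ := by simp [hf]
    rw [this]
    exact LinearMap.mkContinuous_norm_le _ (norm_nonneg ℓ) _
  -- solve A u = f
  have hf_mem : f ∈ R := by rw [hRtop]; trivial
  obtain ⟨u, hu⟩ := hf_mem
  have hAuf : A u = f := hu
  have hbu : ∀ v : V, b u v = ℓ v := by
    intro v
    have h1 : conj (b u v) = conj (ℓ v) := by
      rw [← hAinner, hAuf, hfinner]
    have := congrArg conj h1
    simpa using this
  refine ⟨u, hbu, ?_, ?_⟩
  · have h1 : C * ‖u‖ ≤ ‖A u‖ := hanti u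
    rw [hAuf] at h1
    have h2 : C * ‖u‖ ≤ ‖ℓ‖ := h1.trans hfnorm
    rw [inv_mul_eq_div, le_div_iff₀' hC]
    exact h2
  · intro u' hbu'
    have hAu' : A u' = A u := by
      apply ext_inner_right ℂ
      intro v
      rw [hAinner, hAinner, hbu v, hbu' v]
    have h1 : C * ‖u' - u‖ ≤ ‖A (u' - u)‖ := hanti _
    rw [map_sub, hAu', sub_self, norm_zero] at h1
    have : ‖u' - u‖ ≤ 0 := by nlinarith
    have : u' - u = 0 := by
      have := norm_nonneg (u' - u)
      have h := le_antisymm ‹‖u' - u‖ ≤ 0› this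
      exact norm_eq_zero.mp h
    exact sub_eq_zero.mp this

end
end

section
/- Let P be a finite-dimensional space of functions on an element K of diameter h_K, and suppose the inverse inequality ‖∇(w b_K)‖_{L²(K)} ≤ C_i h_K⁻¹ ‖w‖_{L²(K)} holds for all w ∈ P, and the bubble estimate ‖w‖_{L²(K)} ≤ C_b‖b_K^{1/2}w‖_{L²(K)}. If g ∈ L²(K) and w ∈ P satisfy (b_K w, w)_K = (∇(b_K w), G)_K + (b_K w, r)_K for some G, r ∈ L²(K), then ‖w‖_{L²(K)} ≤ C_b²(C_i h_K⁻¹ ‖G‖_{L²(K)} + ‖r‖_{L²(K)}). -/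
open MeasureTheory

noncomputable section

private lemma mul_int' {α} [MeasurableSpace α] {μ : Measure α} {f g : α → ℝ}
    (hf : MemLp f 2 μ) (hg : MemLp g 2 μ) : Integrable (fun x => f x * g x) μ := by
  refine (hf.integrable_sq.add hg.integrable_sq).mono'
    (hf.aestronglyMeasurable.mul hg.aestronglyMeasurable)
    (Filter.Eventually.of_forall fun x => ?_)
  simp only [Real.norm_eq_abs, abs_mul, Pi.add_apply]
  nlinarith [sq_abs (f x), sq_abs (g x), sq_nonneg (|f x| - |g x|)]

private lemma holder2' {α} [MeasurableSpace α] {μ : Measure α} {f g : α → ℝ}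
    (hf0 : ∀ x, 0 ≤ f x) (hg0 : ∀ x, 0 ≤ g x)
    (hf : MemLp f 2 μ) (hg : MemLp g 2 μ) :
    ∫ x, f x * g x ∂μ ≤ Real.sqrt (∫ x, f x ^ 2 ∂μ) * Real.sqrt (∫ x, g x ^ 2 ∂μ) := by
  have h2 : Real.HolderConjugate 2 2 := (Real.holderConjugate_iff_eq_conjExponent one_lt_two).2 (by norm_num)
  have e2 : ENNReal.ofReal (2:ℝ) = 2 := by simp [ENNReal.ofReal_ofNat]
  have h := integral_mul_le_Lp_mul_Lq_of_nonneg h2 (Filter.Eventually.of_forall hf0)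
    (Filter.Eventually.of_forall hg0) (e2 ▸ hf) (e2 ▸ hg)
  simp_rw [show (2:ℝ) = ((2:ℕ):ℝ) by norm_num, Real.rpow_natCast] at h
  calc ∫ x, f x * g x ∂μ ≤ (∫ a, f a ^ 2 ∂μ) ^ (1/((2:ℕ):ℝ)) * (∫ a, g a ^ 2 ∂μ) ^ (1/((2:ℕ):ℝ)) := h
    _ = _ := by
        push_cast
        rw [← Real.sqrt_eq_rpow, ← Real.sqrt_eq_rpow]


/-- abstract element-residual efficiency argument.  With the inverse
inequality `‖∇(w b_K)‖ ≤ C_i h_K⁻¹ ‖w‖`, the bubble estimate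
`‖w‖ ≤ C_b ‖b_K^{1/2} w‖`, and the integration-by-parts identity
`(b_K w, w)_K = (∇(b_K w), G)_K + (b_K w, r)_K`, one gets
`‖w‖_{L²(K)} ≤ C_b² (C_i h_K⁻¹ ‖G‖_{L²(K)} + ‖r‖_{L²(K)})`. -/
theorem bubble_efficiency_bound
    {n : ℕ} (K : Set (Fin n → ℝ)) (hKop : IsOpen K) (hKbdd : Bornology.IsBounded K)
    (hK : ℝ) (hKpos : 0 < hK) (hdiam : Metric.diam K = hK)
    (bK : (Fin n → ℝ) → ℝ) (hb0 : ∀ x, 0 ≤ bK x) (hb1 : ∀ x, bK x ≤ 1)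
    (hbsupp : ∀ x ∉ K, bK x = 0)
    (P : Submodule ℂ ((Fin n → ℝ) → ℂ)) [FiniteDimensional ℂ P]
    (Ci Cb : ℝ) (hCi : 0 < Ci) (hCb : 0 < Cb)
    -- inverse inequality for all `w ∈ P`
    (hinv : ∀ w ∈ P,
      Real.sqrt (∫ x in K, ∑ i, ‖fderiv ℝ (fun y => bK y • w y) x (Pi.single i 1)‖ ^ 2)
        ≤ Ci * hK⁻¹ * Real.sqrt (∫ x in K, ‖w x‖ ^ 2))
    -- bubble estimate for all `w ∈ P`
    (hbub : ∀ w ∈ P, Real.sqrt (∫ x in K, ‖w x‖ ^ 2)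
        ≤ Cb * Real.sqrt (∫ x in K, bK x * ‖w x‖ ^ 2))
    (w : (Fin n → ℝ) → ℂ) (hw : w ∈ P) (hwL2 : MemLp w 2 (volume.restrict K))
    (G : (Fin n → ℝ) → Fin n → ℂ) (r : (Fin n → ℝ) → ℂ)
    (hG : MemLp G 2 (volume.restrict K)) (hr : MemLp r 2 (volume.restrict K))
    (hgradL2 : MemLp (fun x => fun i : Fin n =>
      fderiv ℝ (fun y => bK y • w y) x (Pi.single i 1)) 2 (volume.restrict K))
    -- integration-by-parts identity `(b_K w, w)_K = (∇(b_K w), G)_K + (b_K w, r)_K`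
    (hident : (∫ x in K, (bK x • w x) * (starRingEnd ℂ) (w x))
      = (∫ x in K, ∑ i, (fderiv ℝ (fun y => bK y • w y) x (Pi.single i 1))
            * (starRingEnd ℂ) (G x i))
        + ∫ x in K, (bK x • w x) * (starRingEnd ℂ) (r x)) :
    Real.sqrt (∫ x in K, ‖w x‖ ^ 2)
      ≤ Cb ^ 2 * (Ci * hK⁻¹ * Real.sqrt (∫ x in K, ∑ i, ‖G x i‖ ^ 2)
          + Real.sqrt (∫ x in K, ‖r x‖ ^ 2)) := by
  classical
  set D : (Fin n → ℝ) → Fin n → ℂ :=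
    fun x => fun i : Fin n => fderiv ℝ (fun y => bK y • w y) x (Pi.single i 1) with hDdef
  have hA : (0:ℝ) ≤ ∫ x in K, ‖w x‖ ^ 2 := integral_nonneg fun x => by positivity
  have hB0 : (0:ℝ) ≤ ∫ x in K, bK x * ‖w x‖ ^ 2 :=
    integral_nonneg fun x => mul_nonneg (hb0 x) (by positivity)
  set N := Real.sqrt (∫ x in K, ‖w x‖ ^ 2) with hNdef
  set B := ∫ x in K, bK x * ‖w x‖ ^ 2 with hBdef
  set SG := Real.sqrt (∫ x in K, ∑ i, ‖G x i‖ ^ 2) with hSGdef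
  set Sr := Real.sqrt (∫ x in K, ‖r x‖ ^ 2) with hSrdef
  have hN0 : 0 ≤ N := Real.sqrt_nonneg _
  have hSG0 : 0 ≤ SG := Real.sqrt_nonneg _
  have hSr0 : 0 ≤ Sr := Real.sqrt_nonneg _
  -- MemLp facts
  have hwn : MemLp (fun x => ‖w x‖) 2 (volume.restrict K) := hwL2.norm
  have hrn : MemLp (fun x => ‖r x‖) 2 (volume.restrict K) := hr.norm
  have sqrtsum_memL2 : ∀ (F : (Fin n → ℝ) → Fin n → ℂ), MemLp F 2 (volume.restrict K) →
      MemLp (fun x => Real.sqrt (∑ i, ‖F x i‖ ^ 2)) 2 (volume.restrict K) := by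
    intro F hF
    have hcont : Continuous (fun v : Fin n → ℂ => Real.sqrt (∑ i, ‖v i‖ ^ 2)) := by
      fun_prop
    refine MemLp.of_le (hF.norm.const_mul (Real.sqrt n))
      (hcont.comp_aestronglyMeasurable hF.aestronglyMeasurable)
      (Filter.Eventually.of_forall fun x => ?_)
    rw [Real.norm_eq_abs, abs_of_nonneg (Real.sqrt_nonneg _)]
    have h1 : ∑ i, ‖F x i‖ ^ 2 ≤ (n : ℝ) * ‖F x‖ ^ 2 := by
      calc ∑ i, ‖F x i‖ ^ 2 ≤ ∑ _i : Fin n, ‖F x‖ ^ 2 :=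
            Finset.sum_le_sum fun i _ => by gcongr; exact norm_le_pi_norm (F x) i
        _ = (n : ℝ) * ‖F x‖ ^ 2 := by simp [Finset.sum_const, Finset.card_univ]
    calc Real.sqrt (∑ i, ‖F x i‖ ^ 2) ≤ Real.sqrt ((n : ℝ) * ‖F x‖ ^ 2) :=
          Real.sqrt_le_sqrt h1
      _ = Real.sqrt n * ‖F x‖ := by
          rw [Real.sqrt_mul (Nat.cast_nonneg n), Real.sqrt_sq (norm_nonneg _)]
      _ ≤ ‖Real.sqrt n * ‖F x‖‖ := le_abs_self _
  have hfD := sqrtsum_memL2 D hgradL2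
  have hfG := sqrtsum_memL2 G hG
  -- bound on the gradient term
  have hI1 : ‖∫ x in K, ∑ i, D x i * (starRingEnd ℂ) (G x i)‖
      ≤ Real.sqrt (∫ x in K, ∑ i, ‖D x i‖ ^ 2) * SG := by
    calc ‖∫ x in K, ∑ i, D x i * (starRingEnd ℂ) (G x i)‖
        ≤ ∫ x in K, ‖∑ i, D x i * (starRingEnd ℂ) (G x i)‖ :=
          norm_integral_le_integral_norm _
      _ ≤ ∫ x in K, Real.sqrt (∑ i, ‖D x i‖ ^ 2) * Real.sqrt (∑ i, ‖G x i‖ ^ 2) := by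
          refine integral_mono_of_nonneg (Filter.Eventually.of_forall fun x => norm_nonneg _)
            (mul_int' hfD hfG) (Filter.Eventually.of_forall fun x => ?_)
          calc ‖∑ i, D x i * (starRingEnd ℂ) (G x i)‖
              ≤ ∑ i, ‖D x i * (starRingEnd ℂ) (G x i)‖ := norm_sum_le _ _
            _ = ∑ i, ‖D x i‖ * ‖G x i‖ := by
                simp [norm_mul, RCLike.norm_conj]
            _ ≤ Real.sqrt (∑ i, ‖D x i‖ ^ 2) * Real.sqrt (∑ i, ‖G x i‖ ^ 2) :=
                Real.sum_mul_le_sqrt_mul_sqrt _ _ _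
      _ ≤ _ := by
          have h := holder2' (fun x => Real.sqrt_nonneg _) (fun x => Real.sqrt_nonneg _) hfD hfG
          have e1 : ∀ x, (Real.sqrt (∑ i, ‖D x i‖ ^ 2)) ^ 2 = ∑ i, ‖D x i‖ ^ 2 := fun x =>
            Real.sq_sqrt (Finset.sum_nonneg fun i _ => sq_nonneg _)
          have e2 : ∀ x, (Real.sqrt (∑ i, ‖G x i‖ ^ 2)) ^ 2 = ∑ i, ‖G x i‖ ^ 2 := fun x =>
            Real.sq_sqrt (Finset.sum_nonneg fun i _ => sq_nonneg _)
          simp only [e1, e2] at h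
          exact h
  -- bound on the zero-order term
  have hI2 : ‖∫ x in K, (bK x • w x) * (starRingEnd ℂ) (r x)‖ ≤ N * Sr := by
    calc ‖∫ x in K, (bK x • w x) * (starRingEnd ℂ) (r x)‖
        ≤ ∫ x in K, ‖(bK x • w x) * (starRingEnd ℂ) (r x)‖ :=
          norm_integral_le_integral_norm _
      _ ≤ ∫ x in K, ‖w x‖ * ‖r x‖ := by
          refine integral_mono_of_nonneg (Filter.Eventually.of_forall fun x => norm_nonneg _)
            (mul_int' hwn hrn) (Filter.Eventually.of_forall fun x => ?_)
          simp only [norm_mul, norm_smul, RCLike.norm_conj, Real.norm_eq_abs,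
            abs_of_nonneg (hb0 x)]
          rw [mul_assoc]
          exact mul_le_of_le_one_left (mul_nonneg (norm_nonneg _) (norm_nonneg _)) (hb1 x)
      _ ≤ N * Sr := holder2' (fun x => norm_nonneg _) (fun x => norm_nonneg _) hwn hrn
  -- the L² mass with bubble weight equals the real part of the complex integral
  have hLeq : (∫ x in K, (bK x • w x) * (starRingEnd ℂ) (w x)) = ((B : ℝ) : ℂ) := by
    have h1 : (∫ x in K, (bK x • w x) * (starRingEnd ℂ) (w x))
        = ∫ x in K, ((bK x * ‖w x‖ ^ 2 : ℝ) : ℂ) := by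
      refine integral_congr_ae (Filter.Eventually.of_forall fun x => ?_)
      simp only [Complex.real_smul, mul_assoc, Complex.mul_conj]
      push_cast [Complex.normSq_eq_norm_sq]
      ring
    rw [hBdef, h1]
    exact integral_ofReal
  have hBle : B ≤ Real.sqrt (∫ x in K, ∑ i, ‖D x i‖ ^ 2) * SG + N * Sr := by
    have hre : B = ((∫ x in K, ∑ i, D x i * (starRingEnd ℂ) (G x i))
        + ∫ x in K, (bK x • w x) * (starRingEnd ℂ) (r x)).re := by
      rw [← hident, hLeq, Complex.ofReal_re]
    calc B ≤ ‖(∫ x in K, ∑ i, D x i * (starRingEnd ℂ) (G x i))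
            + ∫ x in K, (bK x • w x) * (starRingEnd ℂ) (r x)‖ := by
          rw [hre]; exact Complex.re_le_norm _
      _ ≤ ‖∫ x in K, ∑ i, D x i * (starRingEnd ℂ) (G x i)‖
            + ‖∫ x in K, (bK x • w x) * (starRingEnd ℂ) (r x)‖ := norm_add_le _ _
      _ ≤ _ := add_le_add hI1 hI2
  have hSD : Real.sqrt (∫ x in K, ∑ i, ‖D x i‖ ^ 2) ≤ Ci * hK⁻¹ * N := hinv w hw
  have hNB : N ≤ Cb * Real.sqrt B := hbub w hw
  have hN2 : N ^ 2 ≤ Cb ^ 2 * B := by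
    have := pow_le_pow_left₀ hN0 hNB 2
    rwa [mul_pow, Real.sq_sqrt hB0] at this
  have hBfin : B ≤ N * (Ci * hK⁻¹ * SG + Sr) := by
    have h1 : Real.sqrt (∫ x in K, ∑ i, ‖D x i‖ ^ 2) * SG ≤ Ci * hK⁻¹ * N * SG :=
      mul_le_mul_of_nonneg_right hSD hSG0
    nlinarith [hBle]
  have hKinv0 : (0:ℝ) ≤ hK⁻¹ := inv_nonneg.2 hKpos.le
  rcases eq_or_lt_of_le hN0 with h0 | hNpos
  · rw [← h0]
    have : 0 ≤ Ci * hK⁻¹ * SG := mul_nonneg (mul_nonneg hCi.le hKinv0) hSG0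
    nlinarith [sq_nonneg Cb]
  · have key : N ^ 2 ≤ Cb ^ 2 * (N * (Ci * hK⁻¹ * SG + Sr)) := by
      calc N ^ 2 ≤ Cb ^ 2 * B := hN2
        _ ≤ _ := mul_le_mul_of_nonneg_left hBfin (sq_nonneg Cb)
    nlinarith [hNpos, key]

end
end

section
/- Suppose the error e := (E - E_h, J - J_h) ∈ V satisfies, for every (v, w) ∈ V admitting a decomposition v = ∇q + ṽ, w = curl θ + w̃ with ω‖∇q‖_{ε} + ω‖∇θ‖_{α} + ‖∇ṽ‖_{χ} + ‖∇w̃‖_{ζ} ≤ C_rd ⦀(v,w)⦀, the four bounds |b(e, (∇q, 0))| ≤ η_div·ω‖∇q‖_ε, |b(e, (0, curl θ))| ≤ η_curl·ω‖∇θ‖_α, |b(e, (ṽ, 0))| ≤ η_cc·‖∇ṽ‖_χ, |b(e, (0, w̃))| ≤ η_gd·‖∇w̃‖_ζ. If b satisfies the inf-sup condition on V with constant C_is, then ⦀e⦀ ≤ C_is⁻¹ C_rd (η_div + η_curl + η_cc + η_gd). -/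
noncomputable section

/-- assembly of the reliability proof.  If every `v ∈ V` admits a
regular decomposition `v = v₁ + v₂ + v₃ + v₄` with weights
`n₁(v₁) + n₂(v₂) + n₃(v₃) + n₄(v₄) ≤ C_rd ⦀v⦀`, the error `e` satisfies the four
componentwise residual bounds `|b(e,vᵢ)| ≤ ηᵢ nᵢ(vᵢ)` on every such decomposition, and
`b` satisfies the inf-sup condition with constant `C_is`, then
`⦀e⦀ ≤ C_is⁻¹ C_rd (η₁ + η₂ + η₃ + η₄)`. -/
theorem reliability_assembly
    {V : Type*} [NormedAddCommGroup V] [InnerProductSpace ℂ V] [CompleteSpace V]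
    (b : V →ₗ[ℂ] V →ₛₗ[starRingEnd ℂ] ℂ)
    (M : ℝ) (hbdd : ∀ u v : V, ‖b u v‖ ≤ M * ‖u‖ * ‖v‖)
    (Cis Crd : ℝ) (hCis : 0 < Cis) (hCrd : 0 < Crd)
    (hinfsup : ∀ u : V, u ≠ 0 →
      Cis ≤ ⨆ v : {v : V // v ≠ 0}, (b u v.1).re / (‖u‖ * ‖v.1‖))
    (n₁ n₂ n₃ n₄ : V → ℝ)
    (hn₁ : ∀ v, 0 ≤ n₁ v) (hn₂ : ∀ v, 0 ≤ n₂ v)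
    (hn₃ : ∀ v, 0 ≤ n₃ v) (hn₄ : ∀ v, 0 ≤ n₄ v)
    (η₁ η₂ η₃ η₄ : ℝ)
    (hη₁ : 0 ≤ η₁) (hη₂ : 0 ≤ η₂) (hη₃ : 0 ≤ η₃) (hη₄ : 0 ≤ η₄)
    (e : V)
    -- every `v` admits a regular decomposition with controlled weights
    (hdec : ∀ v : V, ∃ v₁ v₂ v₃ v₄ : V, v = v₁ + v₂ + v₃ + v₄ ∧
      n₁ v₁ + n₂ v₂ + n₃ v₃ + n₄ v₄ ≤ Crd * ‖v‖)
    -- the four componentwise residual bounds on every admissible decomposition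
    (hbounds : ∀ v v₁ v₂ v₃ v₄ : V, v = v₁ + v₂ + v₃ + v₄ →
      n₁ v₁ + n₂ v₂ + n₃ v₃ + n₄ v₄ ≤ Crd * ‖v‖ →
      ‖b e v₁‖ ≤ η₁ * n₁ v₁ ∧ ‖b e v₂‖ ≤ η₂ * n₂ v₂ ∧
      ‖b e v₃‖ ≤ η₃ * n₃ v₃ ∧ ‖b e v₄‖ ≤ η₄ * n₄ v₄) :
    ‖e‖ ≤ Cis⁻¹ * Crd * (η₁ + η₂ + η₃ + η₄) := by
  rcases eq_or_ne e 0 with he | he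
  · simp [he]
    positivity
  have hen : 0 < ‖e‖ := norm_pos_iff.mpr he
  set S := η₁ + η₂ + η₃ + η₄ with hS
  have hSnn : 0 ≤ S := by positivity
  have key : ∀ v : V, (b e v).re ≤ Crd * S * ‖v‖ := by
    intro v
    obtain ⟨v₁, v₂, v₃, v₄, hv, hw⟩ := hdec v
    obtain ⟨h1, h2, h3, h4⟩ := hbounds v v₁ v₂ v₃ v₄ hv hw
    have hn1 := hn₁ v₁; have hn2 := hn₂ v₂; have hn3 := hn₃ v₃; have hn4 := hn₄ v₄
    have k1 : n₁ v₁ ≤ Crd * ‖v‖ := by linarith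
    have k2 : n₂ v₂ ≤ Crd * ‖v‖ := by linarith
    have k3 : n₃ v₃ ≤ Crd * ‖v‖ := by linarith
    have k4 : n₄ v₄ ≤ Crd * ‖v‖ := by linarith
    have hb : ‖b e v‖ ≤ Crd * S * ‖v‖ := by
      calc ‖b e v‖ = ‖b e v₁ + b e v₂ + b e v₃ + b e v₄‖ := by
            rw [hv]; simp [map_add]
        _ ≤ ‖b e v₁‖ + ‖b e v₂‖ + ‖b e v₃‖ + ‖b e v₄‖ := by
            calc ‖b e v₁ + b e v₂ + b e v₃ + b e v₄‖
                ≤ ‖b e v₁ + b e v₂ + b e v₃‖ + ‖b e v₄‖ := norm_add_le _ _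
              _ ≤ (‖b e v₁ + b e v₂‖ + ‖b e v₃‖) + ‖b e v₄‖ := by
                  gcongr; exact norm_add_le _ _
              _ ≤ (‖b e v₁‖ + ‖b e v₂‖ + ‖b e v₃‖) + ‖b e v₄‖ := by
                  gcongr; exact norm_add_le _ _
        _ ≤ η₁ * (Crd * ‖v‖) + η₂ * (Crd * ‖v‖) + η₃ * (Crd * ‖v‖) + η₄ * (Crd * ‖v‖) := by
            have e1 : ‖b e v₁‖ ≤ η₁ * (Crd * ‖v‖) :=
              h1.trans (by nlinarith)
            have e2 : ‖b e v₂‖ ≤ η₂ * (Crd * ‖v‖) :=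
              h2.trans (by nlinarith)
            have e3 : ‖b e v₃‖ ≤ η₃ * (Crd * ‖v‖) :=
              h3.trans (by nlinarith)
            have e4 : ‖b e v₄‖ ≤ η₄ * (Crd * ‖v‖) :=
              h4.trans (by nlinarith)
            linarith
        _ = Crd * S * ‖v‖ := by rw [hS]; ring
    calc (b e v).re ≤ |(b e v).re| := le_abs_self _
      _ ≤ ‖b e v‖ := Complex.abs_re_le_norm _
      _ ≤ Crd * S * ‖v‖ := hb
  have hne : Nonempty {v : V // v ≠ 0} := ⟨⟨e, he⟩⟩
  have hsup : Cis ≤ Crd * S / ‖e‖ := by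
    refine (hinfsup e he).trans (ciSup_le fun v => ?_)
    have hvn : 0 < ‖v.1‖ := norm_pos_iff.mpr v.2
    rw [div_le_div_iff₀ (mul_pos hen hvn) hen]
    nlinarith [key v.1]
  rw [le_div_iff₀ hen] at hsup
  have hCi : 0 < Cis⁻¹ := inv_pos.mpr hCis
  calc ‖e‖ = Cis⁻¹ * (Cis * ‖e‖) := by field_simp
    _ ≤ Cis⁻¹ * (Crd * S) := by gcongr
    _ = Cis⁻¹ * Crd * S := by ring

end
end
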